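/- In a right Bol magma L with neutral element 1, if an element b satisfies b^m = b^n for distinct positive integers m and n, and b has a right inverse (some a with a·b = 1), then b^k = 1 for some positive integer k. -/

import Mathlib

/-- Magma powers: `a^0 = 1`, `a^(n+1) = a^n * a`. -/
def mpow {L : Type*} [Mul L] [One L] (a : L) : ℕ → L
  | 0 => 1
  | n + 1 => mpow a n * a

lemma mpow_one' {L : Type*} [Mul L] [One L] (hone : ∀ x : L, 1 * x = x ∧ x * 1 = x)
    (b : L) : mpow b 1 = b := by
  show (1 : L) * b = b
  exact (hone b).1

lemma mpow_add' {L : Type*} [Mul L] [One L]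
    (hBol : ∀ x y z : L, ((x * y) * z) * y = x * ((y * z) * y))
    (hone : ∀ x : L, 1 * x = x ∧ x * 1 = x)
    (b : L) : ∀ j i, mpow b i * mpow b j = mpow b (i + j) := by
  intro j
  induction j using Nat.twoStepInduction with
  | zero =>
    intro i
    show mpow b i * 1 = mpow b (i + 0)
    rw [(hone _).2]
    rfl
  | one =>
    intro i
    rw [mpow_one' hone]
    rfl
  | more j ih _ =>
    intro i
    have hb1 : mpow b 1 = b := mpow_one' hone b
    have h1j : b * mpow b j = mpow b (j + 1) := by
      have := ih 1
      rw [hb1, Nat.add_comm] at this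
      exact this
    calc mpow b i * mpow b (j + 2)
        = mpow b i * ((b * mpow b j) * b) := by
          rw [h1j]; rfl
      _ = ((mpow b i * b) * mpow b j) * b := (hBol _ _ _).symm
      _ = (mpow b (i + 1) * mpow b j) * b := rfl
      _ = mpow b (i + 1 + j) * b := by rw [ih (i + 1)]
      _ = mpow b (i + (j + 2)) := by
          show mpow b (i + 1 + j + 1) = mpow b (i + (j + 2))
          ring_nf

lemma mpow_iter' {L : Type*} [Mul L] [One L]
    (hBol : ∀ x y z : L, ((x * y) * z) * y = x * ((y * z) * y))
    (hone : ∀ x : L, 1 * x = x ∧ x * 1 = x)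
    (b : L) : ∀ k x, x * mpow b k = (fun y => y * b)^[k] x := by
  intro k
  induction k using Nat.twoStepInduction with
  | zero => intro x; exact (hone x).2
  | one => intro x; rw [mpow_one' hone]; rfl
  | more k ih _ =>
    intro x
    have hb1 : mpow b 1 = b := mpow_one' hone b
    have h1k : b * mpow b k = mpow b (k + 1) := by
      have := mpow_add' hBol hone b k 1
      rw [hb1, Nat.add_comm] at this
      exact this
    have hform : mpow b (k + 2) = (b * mpow b k) * b := by rw [h1k]; rfl
    calc x * mpow b (k + 2)
        = x * ((b * mpow b k) * b) := by rw [hform]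
      _ = ((x * b) * mpow b k) * b := (hBol _ _ _).symm
      _ = ((fun y => y * b)^[k] (x * b)) * b := by rw [ih (x * b)]
      _ = (fun y => y * b)^[k + 2] x := by
          rw [Function.iterate_succ_apply, Function.iterate_succ_apply']

lemma mpow_descend' {L : Type*} [Mul L] [One L]
    (hBol : ∀ x y z : L, ((x * y) * z) * y = x * ((y * z) * y))
    (hone : ∀ x : L, 1 * x = x ∧ x * 1 = x)
    (b a : L) (hab : a * b = 1) (d : ℕ) :
    ∀ j, mpow b (j + d) = mpow b j → mpow b d = 1 := by
  intro j
  induction j with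
  | zero => intro h; simpa [mpow] using h
  | succ j ih =>
    intro h
    have key : ∀ x : L, x * mpow b (j + 1 + d) = x * mpow b (j + 1) := by
      intro x; rw [h]
    have ha := key a
    rw [mpow_iter' hBol hone b (j + 1 + d) a, mpow_iter' hBol hone b (j + 1) a] at ha
    have e1 : (fun y => y * b)^[j + 1 + d] a = mpow b (j + d) := by
      have : j + 1 + d = (j + d) + 1 := by ring
      rw [this, Function.iterate_succ_apply]
      show (fun y => y * b)^[j + d] (a * b) = mpow b (j + d)
      rw [hab, ← mpow_iter' hBol hone b (j + d) 1, (hone _).1]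
    have e2 : (fun y => y * b)^[j + 1] a = mpow b j := by
      rw [Function.iterate_succ_apply]
      show (fun y => y * b)^[j] (a * b) = mpow b j
      rw [hab, ← mpow_iter' hBol hone b j 1, (hone _).1]
    rw [e1, e2] at ha
    exact ih ha

theorem bol_torsion_power_one {L : Type*} [Mul L] [One L]
    (hBol : ∀ x y z : L, ((x * y) * z) * y = x * ((y * z) * y))
    (hone : ∀ x : L, 1 * x = x ∧ x * 1 = x)
    (b : L) (m n : ℕ) (hm : 0 < m) (hn : 0 < n) (hmn : m ≠ n)
    (hpow : mpow b m = mpow b n)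
    (a : L) (hab : a * b = 1) :
    ∃ k : ℕ, 0 < k ∧ mpow b k = 1 := by
  rcases lt_or_gt_of_ne hmn with hlt | hlt
  · -- m < n
    refine ⟨n - m, Nat.sub_pos_of_lt hlt, ?_⟩
    apply mpow_descend' hBol hone b a hab (n - m) m
    rw [Nat.add_sub_cancel' hlt.le]
    exact hpow.symm
  · -- n < m
    refine ⟨m - n, Nat.sub_pos_of_lt hlt, ?_⟩
    apply mpow_descend' hBol hone b a hab (m - n) n
    rw [Nat.add_sub_cancel' hlt.le]
    exact hpow
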